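/- For every integer n ≥ 2, the n-th Catalan number satisfies C_n = ∑_{1 ≤ k ≤ n/2} 2^{n-2k} · C(n, 2k) · C_k · (k(n+2))/(n(n-1)), where the sum is over integers k with 1 ≤ k ≤ n/2. Equivalently, after clearing denominators, n(n-1)·C_n = ∑_{1 ≤ k ≤ n/2} 2^{n-2k} · C(n, 2k) · C_k · k(n+2). -/

import Mathlib

open Polynomial Finset

lemma coeff_one_add_two_X (s i : ℕ) :
    (((1 + C 2 * X : ℕ[X])) ^ s).coeff i = s.choose i * 2 ^ i := by
  rw [add_comm, add_pow]
  rw [finset_sum_coeff]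
  have : ∀ t ∈ range (s+1),
      ((C 2 * X) ^ t * 1 ^ (s - t) * (s.choose t : ℕ[X])).coeff i
        = if t = i then s.choose i * 2 ^ i else 0 := by
    intro t _
    rw [one_pow, mul_one, mul_pow, ← C_pow, ← C_eq_natCast, coeff_mul_C, coeff_C_mul,
      coeff_X_pow]
    rcases eq_or_ne t i with rfl | h
    · simp [mul_comm]
    · simp [Ne.symm h, h]
  rw [Finset.sum_congr rfl this, Finset.sum_ite_eq' (range (s+1)) i]
  split_ifs with h
  · rfl
  · have : s < i := by simpa using h
    rw [Nat.choose_eq_zero_of_lt this, zero_mul]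

lemma key_sum (n m : ℕ) :
    (2*n).choose m = ∑ j ∈ range (n+1),
      n.choose j * (if 2*j ≤ m then (n-j).choose (m-2*j) * 2^(m-2*j) else 0) := by
  have hC2 : (C 2 : ℕ[X]) = 2 := by
    rw [← Nat.cast_ofNat, C_eq_natCast, Nat.cast_ofNat]
  have h1 : ((1 + X : ℕ[X])) ^ (2*n) = (X^2 + (1 + C 2 * X))^n := by
    have h2 : ((1 + X : ℕ[X]))^2 = X^2 + (1 + C 2 * X) := by rw [hC2]; ring
    rw [pow_mul, h2]
  have h3 := congrArg (fun p => Polynomial.coeff p m) h1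
  simp only [coeff_one_add_X_pow, Nat.cast_id] at h3
  rw [add_pow, finset_sum_coeff] at h3
  rw [h3]
  refine Finset.sum_congr rfl ?_
  intro j _
  have e : (X^2:ℕ[X])^j * (1 + C 2 * X)^(n-j) * ((n.choose j : ℕ) : ℕ[X])
      = ((1 + C 2 * X)^(n-j) * ((n.choose j : ℕ) : ℕ[X])) * X^(2*j) := by ring
  rw [e, coeff_mul_X_pow']
  split_ifs with h
  · rw [← C_eq_natCast, coeff_mul_C, coeff_one_add_two_X]; push_cast; ring
  · rfl

lemma mul_catalan_eq (k : ℕ) (hk : 1 ≤ k) : k * catalan k = (2*k).choose (k-1) := by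
  have h := Nat.choose_succ_right_eq (2*k) (k-1)
  have hk1 : k - 1 + 1 = k := by omega
  have h2 : 2*k - (k-1) = k+1 := by omega
  rw [hk1, h2] at h
  have hc : (k+1) * catalan k = (2*k).choose k := by
    rw [← Nat.centralBinom_eq_two_mul_choose]
    exact succ_mul_catalan_eq_centralBinom k
  refine Nat.eq_of_mul_eq_mul_left (Nat.succ_pos k) ?_
  calc (k+1) * (k * catalan k) = ((k+1) * catalan k) * k := by ring
    _ = (2*k).choose k * k := by rw [hc]
    _ = (2*k).choose (k-1) * (k+1) := h
    _ = (k+1) * ((2*k).choose (k-1)) := by ring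

lemma sumT (n : ℕ) (hn : 2 ≤ n) :
    ∑ k ∈ Finset.Icc 1 (n/2), 2^(n-2*k) * n.choose (2*k) * (k * catalan k)
      = (2*n).choose (n-2) := by
  rw [key_sum n (n-2)]
  rw [← Finset.sum_subset (Finset.range_subset_range.2 (by omega : n/2 ≤ n+1))
    (fun j _ hj => by
      have : ¬ (2*j ≤ n-2) := by
        simp only [Finset.mem_range, not_lt] at hj
        omega
      rw [if_neg this, mul_zero])]
  rw [← Finset.Ico_add_one_right_eq_Icc, Finset.sum_Ico_eq_sum_range]
  have hub : n/2 + 1 - 1 = n/2 := by omega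
  rw [hub]
  refine Finset.sum_congr rfl ?_
  intro j hj
  have hjlt : j < n/2 := Finset.mem_range.1 hj
  have hcond : 2*j ≤ n-2 := by omega
  rw [if_pos hcond]
  have he : n - 2*(1+j) = n-2-2*j := by omega
  have h1 : (1+j) * catalan (1+j) = (2*(1+j)).choose j := by
    have := mul_catalan_eq (1+j) (by omega)
    simpa using this
  have h2 : n.choose (2*(1+j)) * (2*(1+j)).choose j = n.choose j * (n-j).choose (j+2) := by
    have := Nat.choose_mul (n := n) (k := 2*(1+j)) (s := j) (by omega)
    rw [this]
    congr 1
    · congr 1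
      omega
  have h3 : (n-j).choose (n-2-2*j) = (n-j).choose (j+2) := by
    rw [← Nat.choose_symm (by omega : n-2-2*j ≤ n-j)]
    congr 1
    omega
  rw [he, mul_assoc, h1, h2, h3]
  ring

lemma natid (n : ℕ) (hn : 2 ≤ n) :
    catalan n * (n*(n-1)) = (2*n).choose (n-2) * (n+2) := by
  have a := Nat.choose_succ_right_eq (2*n) (n-2)
  rw [(by omega : n-2+1 = n-1), (by omega : 2*n-(n-2) = n+2)] at a
  have b := Nat.choose_succ_right_eq (2*n) (n-1)
  rw [(by omega : n-1+1 = n), (by omega : 2*n-(n-1) = n+1)] at b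
  have c : (n+1) * catalan n = (2*n).choose n := by
    rw [← Nat.centralBinom_eq_two_mul_choose]; exact succ_mul_catalan_eq_centralBinom n
  refine Nat.eq_of_mul_eq_mul_left (Nat.succ_pos n) ?_
  calc (n+1) * (catalan n * (n*(n-1))) = ((n+1)*catalan n) * n * (n-1) := by ring
    _ = (2*n).choose n * n * (n-1) := by rw [c]
    _ = (2*n).choose (n-1) * (n+1) * (n-1) := by rw [b]
    _ = ((2*n).choose (n-1) * (n-1)) * (n+1) := by ring
    _ = ((2*n).choose (n-2) * (n+2)) * (n+1) := by rw [a]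
    _ = (n+1) * ((2*n).choose (n-2) * (n+2)) := by ring

/-- For every integer `n ≥ 2`,
`C n = ∑_{1 ≤ k ≤ n/2} 2^(n-2k) * (n choose 2k) * C k * (k*(n+2))/(n*(n-1))`,
as an identity of rational numbers, where `C` is the Catalan number. -/
theorem catalan_identity_variant (n : ℕ) (hn : 2 ≤ n) :
    (catalan n : ℚ) =
      ∑ k ∈ Finset.Icc 1 (n / 2),
        2 ^ (n - 2 * k) * (n.choose (2 * k) : ℚ) * (catalan k : ℚ) *
          (k * (n + 2)) / (n * (n - 1)) := by
  have hS := sumT n hn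
  have hterm : ∀ k ∈ Finset.Icc 1 (n/2),
      (2:ℚ) ^ (n - 2 * k) * (n.choose (2 * k) : ℚ) * (catalan k : ℚ) *
          (k * (n + 2)) / (n * (n - 1))
        = ((2^(n-2*k) * n.choose (2*k) * (k * catalan k) : ℕ) : ℚ)
            * (((n:ℚ)+2) / ((n:ℚ) * ((n:ℚ)-1))) := by
    intro k hk
    push_cast
    rw [div_eq_mul_inv, div_eq_mul_inv]
    ring
  rw [Finset.sum_congr rfl hterm, ← Finset.sum_mul, ← Nat.cast_sum, hS]
  have hN := natid n hn
  have hQ : (catalan n : ℚ) * ((n:ℚ) * ((n:ℚ)-1))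
      = (((2*n).choose (n-2) : ℕ) : ℚ) * ((n:ℚ)+2) := by
    have := congrArg (Nat.cast : ℕ → ℚ) hN
    push_cast [Nat.cast_sub (show 1 ≤ n by omega)] at this
    linarith [this]
  have hne : (n:ℚ) * ((n:ℚ)-1) ≠ 0 := by
    have h2 : (2:ℚ) ≤ (n:ℚ) := by exact_mod_cast hn
    have : (0:ℚ) < (n:ℚ) * ((n:ℚ)-1) := by nlinarith
    exact ne_of_gt this
  rw [← mul_div_assoc, eq_div_iff hne]
  exact hQ
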